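/- Let L be the free Lie algebra over a field K on a set X with distinct elements a, b, c, and let f be a polynomial over K such that ⁅Σᵢ (coeff f i) • (ad ι(a))^{2i} (ι(c)), ι(b)⁆ lies in the image of the map x ↦ ⁅x, ι(a)⁆ translated by K·ι(a) (i.e., equals ⁅z, ι(a)⁆ for some z). Then f = 0. -/

import Mathlib

attribute [local instance 100] LieRing.ofAssociativeRing

namespace FreeLieInjAux

open MonoidAlgebra

variable {K : Type*} [Field K] {X : Type*}

/-- The word `c a^m` as an element of the free monoid. -/
def W (a c : X) (m : ℕ) : FreeMonoid X := FreeMonoid.ofList (c :: List.replicate m a)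

lemma toList_W (a c : X) (m : ℕ) :
    FreeMonoid.toList (W a c m) = c :: List.replicate m a := rfl

lemma W_succ (a c : X) (m : ℕ) : W a c (m + 1) = W a c m * FreeMonoid.of a := by
  apply FreeMonoid.toList.injective
  simp [toList_W, FreeMonoid.toList_mul, FreeMonoid.toList_of, List.replicate_succ']

/-- No word starting with `c` is of the form `(of x) * d` when `x ≠ c`. -/
lemma not_exists_head {x c : X} (h : x ≠ c) (l : List X) :
    ¬∃ d : FreeMonoid X, FreeMonoid.ofList (c :: l) = FreeMonoid.of x * d := by
  rintro ⟨d, hd⟩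
  have := congrArg FreeMonoid.toList hd
  rw [FreeMonoid.toList_mul] at this
  have : c :: l = x :: FreeMonoid.toList d := this
  exact h (List.cons.injEq .. ▸ this).1.symm

/-- No word ending with `y` is of the form `d * (of x)` when `y ≠ x`. -/
lemma not_exists_last {x y : X} (h : y ≠ x) (l : List X) :
    ¬∃ d : FreeMonoid X, FreeMonoid.ofList (l ++ [y]) = d * FreeMonoid.of x := by
  rintro ⟨d, hd⟩
  have h1 := congrArg (fun t => (FreeMonoid.toList t).getLast?) hd
  simp only [FreeMonoid.toList_mul] at h1
  have h2 : (l ++ [y]).getLast? = (FreeMonoid.toList d ++ [x]).getLast? := h1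
  rw [List.getLast?_concat, List.getLast?_concat] at h2
  exact h (Option.some.inj h2)

lemma W_cons (a c : X) (m : ℕ) :
    W a c m = FreeMonoid.ofList (c :: List.replicate m a) := rfl

/-- Key cancellation: `d * of a = W a c (m+1) ↔ d = W a c m`. -/
lemma mul_of_eq_W_succ (a c : X) (m : ℕ) (d : FreeMonoid X) :
    d * FreeMonoid.of a = W a c (m + 1) ↔ d = W a c m := by
  rw [W_succ]
  constructor
  · exact fun h => mul_right_cancel h
  · rintro rfl; rfl

/-- The key computation: the coefficient of the word `c a^m` in
`(ad A)^n C` (with `ad u x = x * u - u * x`) is `δ_{n m}`. -/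
lemma iterate_apply_W {a c : X} (hac : a ≠ c) (n m : ℕ) :
    ((fun w : MonoidAlgebra K (FreeMonoid X) =>
        ⁅w, MonoidAlgebra.single (FreeMonoid.of a) (1 : K)⁆)^[n]
      (MonoidAlgebra.single (FreeMonoid.of c) (1 : K))).coeff (W a c m)
      = if n = m then 1 else 0 := by
  induction n generalizing m with
  | zero =>
    rw [Function.iterate_zero_apply]
    cases m with
    | zero =>
      have : W a c 0 = FreeMonoid.of c := rfl
      rw [this, if_pos rfl]
      simp [MonoidAlgebra.coeff_single]
    | succ m =>
      rw [if_neg (by omega)]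
      refine Finsupp.single_eq_of_ne' ?_
      intro h
      have := congrArg (fun t => (FreeMonoid.toList t).length) h
      simp [toList_W, FreeMonoid.toList_of] at this
  | succ n ih =>
    rw [Function.iterate_succ_apply', Ring.lie_def, MonoidAlgebra.coeff_sub, Finsupp.sub_apply]
    have hz : (MonoidAlgebra.single (FreeMonoid.of a) (1 : K) *
        ((fun w : MonoidAlgebra K (FreeMonoid X) =>
          ⁅w, MonoidAlgebra.single (FreeMonoid.of a) (1 : K)⁆)^[n]
          (MonoidAlgebra.single (FreeMonoid.of c) (1 : K)))).coeff (W a c m) = 0 :=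
      MonoidAlgebra.single_mul_apply_of_not_exists_mul _ _
        (not_exists_head hac (List.replicate m a))
    rw [hz, sub_zero]
    cases m with
    | zero =>
      rw [if_neg (by omega)]
      refine MonoidAlgebra.mul_single_apply_of_not_exists_mul _ _ ?_
      have : W a c 0 = FreeMonoid.ofList ([] ++ [c]) := rfl
      rw [this]
      exact not_exists_last (Ne.symm hac) []
    | succ m =>
      rw [MonoidAlgebra.coeff_mul_single_eq_coeff_mul _ (fun d _ => mul_of_eq_W_succ a c m d),
        ih m, mul_one]
      simp only [Nat.succ_inj]

end FreeLieInjAux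

theorem free_lie_injectivity_step {K : Type*} [Field K] {X : Type*} (a b c : X)
    (hab : a ≠ b) (hac : a ≠ c) (hbc : b ≠ c) (f : Polynomial K)
    (h : ∃ z : FreeLieAlgebra K X,
      ⁅f.sum fun i α =>
          α • (fun w : FreeLieAlgebra K X => ⁅w, FreeLieAlgebra.of K a⁆)^[2 * i]
            (FreeLieAlgebra.of K c), FreeLieAlgebra.of K b⁆ = ⁅z, FreeLieAlgebra.of K a⁆) :
    f = 0 := by
  classical
  obtain ⟨z, hz⟩ := h
  open FreeLieInjAux MonoidAlgebra in
  -- the Lie algebra morphism to the monoid algebra of the free monoid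
  set φ : FreeLieAlgebra K X →ₗ⁅K⁆ MonoidAlgebra K (FreeMonoid X) :=
    FreeLieAlgebra.lift K (fun x => MonoidAlgebra.single (FreeMonoid.of x) (1 : K)) with hφ
  have hφof : ∀ x : X, φ (FreeLieAlgebra.of K x)
      = MonoidAlgebra.single (FreeMonoid.of x) (1 : K) := fun x =>
    FreeLieAlgebra.lift_of_apply _ x
  -- φ commutes with the iterated adjoint action
  have hiter : ∀ (n : ℕ) (v : FreeLieAlgebra K X),
      φ ((fun w : FreeLieAlgebra K X => ⁅w, FreeLieAlgebra.of K a⁆)^[n] v)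
        = (fun w : MonoidAlgebra K (FreeMonoid X) =>
            ⁅w, MonoidAlgebra.single (FreeMonoid.of a) (1 : K)⁆)^[n] (φ v) := by
    intro n
    induction n with
    | zero => intro v; simp
    | succ n ih =>
      intro v
      rw [Function.iterate_succ_apply', Function.iterate_succ_apply', LieHom.map_lie,
        ih, hφof]
  have hmain := congrArg φ hz
  rw [LieHom.map_lie, LieHom.map_lie, hφof, hφof] at hmain
  -- push φ through the polynomial sum
  have hsum : ∀ (s : Finset ℕ) (g : ℕ → FreeLieAlgebra K X),
      φ (∑ i ∈ s, g i) = ∑ i ∈ s, φ (g i) := fun s g => map_sum φ.toLinearMap g s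
  rw [Polynomial.sum_def, hsum] at hmain
  simp only [map_smul, hiter, hφof] at hmain
  rw [Ring.lie_def, Ring.lie_def] at hmain
  -- now extract coefficients at the word `c a^(2n) b`
  ext n
  rw [Polynomial.coeff_zero]
  have hcoeff := congrArg (fun p => p.coeff (W a c (2 * n) * FreeMonoid.of b)) hmain
  rw [MonoidAlgebra.coeff_sub, MonoidAlgebra.coeff_sub, Finsupp.sub_apply, Finsupp.sub_apply] at hcoeff
  -- RHS terms vanish
  have hV : W a c (2 * n) * FreeMonoid.of b
      = FreeMonoid.ofList ((c :: List.replicate (2 * n) a) ++ [b]) := rfl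
  have hr1 : (φ z * MonoidAlgebra.single (FreeMonoid.of a) (1 : K)).coeff
      (W a c (2 * n) * FreeMonoid.of b) = 0 := by
    refine MonoidAlgebra.mul_single_apply_of_not_exists_mul _ _ ?_
    rw [hV]; exact not_exists_last (Ne.symm hab) _
  have hr2 : (MonoidAlgebra.single (FreeMonoid.of a) (1 : K) * φ z).coeff
      (W a c (2 * n) * FreeMonoid.of b) = 0 := by
    refine MonoidAlgebra.single_mul_apply_of_not_exists_mul _ _ ?_
    rw [hV]
    exact not_exists_head hac _
  -- second LHS term vanishes
  have hl2 : (MonoidAlgebra.single (FreeMonoid.of b) (1 : K) *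
      (∑ i ∈ f.support, Polynomial.coeff f i •
        (fun w : MonoidAlgebra K (FreeMonoid X) =>
          ⁅w, MonoidAlgebra.single (FreeMonoid.of a) (1 : K)⁆)^[2 * i]
          (MonoidAlgebra.single (FreeMonoid.of c) (1 : K)))).coeff
      (W a c (2 * n) * FreeMonoid.of b) = 0 := by
    refine MonoidAlgebra.single_mul_apply_of_not_exists_mul _ _ ?_
    rw [hV]
    exact not_exists_head hbc _
  -- first LHS term
  have hl1 : ((∑ i ∈ f.support, Polynomial.coeff f i •
      (fun w : MonoidAlgebra K (FreeMonoid X) =>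
        ⁅w, MonoidAlgebra.single (FreeMonoid.of a) (1 : K)⁆)^[2 * i]
        (MonoidAlgebra.single (FreeMonoid.of c) (1 : K))) *
      MonoidAlgebra.single (FreeMonoid.of b) (1 : K)).coeff
      (W a c (2 * n) * FreeMonoid.of b) = Polynomial.coeff f n := by
    rw [MonoidAlgebra.coeff_mul_single_eq_coeff_mul _
      (fun d _ => ⟨fun hd => mul_right_cancel hd, fun hd => by rw [hd]⟩), mul_one]
    rw [MonoidAlgebra.coeff_sum, Finsupp.finset_sum_apply]
    have : ∀ i ∈ f.support, (Polynomial.coeff f i •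
        (fun w : MonoidAlgebra K (FreeMonoid X) =>
          ⁅w, MonoidAlgebra.single (FreeMonoid.of a) (1 : K)⁆)^[2 * i]
          (MonoidAlgebra.single (FreeMonoid.of c) (1 : K))).coeff (W a c (2 * n))
        = if i = n then Polynomial.coeff f i else 0 := by
      intro i _
      rw [MonoidAlgebra.coeff_smul_apply, iterate_apply_W hac (2 * i) (2 * n), smul_eq_mul]
      by_cases hin : i = n
      · simp [hin]
      · rw [if_neg (by omega), if_neg hin, mul_zero]
    rw [Finset.sum_congr rfl this, Finset.sum_ite_eq' f.support n
      (fun i => Polynomial.coeff f i)]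
    by_cases hn : n ∈ f.support
    · rw [if_pos hn]
    · rw [if_neg hn]
      exact (Polynomial.notMem_support_iff.mp hn).symm
  rw [hr1, hr2, hl1, hl2, sub_zero, sub_zero] at hcoeff
  exact hcoeff
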